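/- A univariate generalized polynomial f(x) = c_1 x^{a_1} + ... + c_m x^{a_m}, where c_1,...,c_m are real numbers and a_1 < a_2 < ... < a_m are real exponents, has at most as many roots in the positive reals as the number of sign alternations in the sequence (c_1,...,c_m); in particular it has at most m-1 positive roots. -/

import Mathlib

open scoped Classical

open Filter Set Real Topology

noncomputable section DescartesAux

/-- The finset of sign alternations of a finite sequence. -/
def alts (m : ℕ) (c : Fin m → ℝ) : Finset (Fin m × Fin m) :=
  Finset.univ.filter (fun p => p.1 < p.2 ∧ c p.1 * c p.2 < 0 ∧
    ∀ i, p.1 < i → i < p.2 → c i = 0)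

lemma mem_alts {m : ℕ} {c : Fin m → ℝ} {p : Fin m × Fin m} :
    p ∈ alts m c ↔ p.1 < p.2 ∧ c p.1 * c p.2 < 0 ∧ ∀ i, p.1 < i → i < p.2 → c i = 0 := by
  simp [alts]

lemma ne_zero_of_mul_neg_left {x y : ℝ} (h : x * y < 0) : x ≠ 0 := by
  intro h0; rw [h0, zero_mul] at h; exact lt_irrefl _ h

lemma ne_zero_of_mul_neg_right {x y : ℝ} (h : x * y < 0) : y ≠ 0 := by
  intro h0; rw [h0, mul_zero] at h; exact lt_irrefl _ h

lemma alts_card_le (m : ℕ) (c : Fin m → ℝ) : (alts m c).card ≤ m - 1 := by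
  cases m with
  | zero =>
    have : alts 0 c = ∅ := Finset.eq_empty_of_forall_notMem (fun p _ => p.1.elim0)
    simp [this]
  | succ n =>
    have hinj : Set.InjOn Prod.snd ((alts (n + 1) c : Finset (Fin (n+1) × Fin (n+1))) : Set (Fin (n+1) × Fin (n+1))) := by
      intro p hp q hq hpq
      obtain ⟨hp1, hp2, hp3⟩ := mem_alts.mp hp
      obtain ⟨hq1, hq2, hq3⟩ := mem_alts.mp hq
      rcases lt_trichotomy p.1 q.1 with h | h | h
      · exfalso
        exact (ne_zero_of_mul_neg_left hq2) (hp3 q.1 h (hpq ▸ hq1))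
      · exact Prod.ext h hpq
      · exfalso
        exact (ne_zero_of_mul_neg_left hp2) (hq3 p.1 h (hpq ▸ hp1))
    calc (alts (n+1) c).card = ((alts (n+1) c).image Prod.snd).card :=
          (Finset.card_image_of_injOn hinj).symm
      _ ≤ (Finset.univ.erase (0 : Fin (n+1))).card := by
          apply Finset.card_le_card
          intro j hj
          obtain ⟨p, hp, rfl⟩ := Finset.mem_image.mp hj
          obtain ⟨hp1, _, _⟩ := mem_alts.mp hp
          exact Finset.mem_erase.mpr ⟨(lt_of_le_of_lt (Fin.zero_le _) hp1).ne', Finset.mem_univ _⟩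
      _ = n := by
          rw [Finset.card_erase_of_mem (Finset.mem_univ _), Finset.card_univ, Fintype.card_fin]
          omega
      _ = n + 1 - 1 := by omega

lemma alts_succ (m : ℕ) (c : Fin (m + 1) → ℝ) :
    (alts (m + 1) c).card =
      ((alts (m + 1) c).filter (fun p => p.1 = 0)).card + (alts m (fun i => c i.succ)).card := by
  rw [← Finset.card_filter_add_card_filter_not
    (s := alts (m+1) c) (fun p : Fin (m+1) × Fin (m+1) => p.1 = 0)]
  congr 1
  symm
  apply Finset.card_bij (fun (q : Fin m × Fin m) _ => ((q.1.succ, q.2.succ) : Fin (m+1) × Fin (m+1)))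
  · intro q hq
    obtain ⟨hq1, hq2, hq3⟩ := mem_alts.mp hq
    refine Finset.mem_filter.mpr ⟨mem_alts.mpr ⟨Fin.succ_lt_succ_iff.mpr hq1, hq2, ?_⟩, by
      simp [Fin.succ_ne_zero]⟩
    intro i h1 h2
    have hi0 : i ≠ 0 := (lt_of_le_of_lt (Fin.zero_le _) h1).ne'
    obtain ⟨j, rfl⟩ := Fin.eq_succ_of_ne_zero hi0
    exact hq3 j (Fin.succ_lt_succ_iff.mp h1) (Fin.succ_lt_succ_iff.mp h2)
  · intro q hq q' hq' h
    have h1 := congrArg Prod.fst h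
    have h2 := congrArg Prod.snd h
    simp only at h1 h2
    exact Prod.ext (Fin.succ_injective _ h1) (Fin.succ_injective _ h2)
  · intro p hp
    obtain ⟨hpm, hp0⟩ := Finset.mem_filter.mp hp
    obtain ⟨hp1, hp2, hp3⟩ := mem_alts.mp hpm
    obtain ⟨u, hu⟩ := Fin.eq_succ_of_ne_zero hp0
    have hp20 : p.2 ≠ 0 := (lt_of_le_of_lt (Fin.zero_le _) hp1).ne'
    obtain ⟨v, hv⟩ := Fin.eq_succ_of_ne_zero hp20
    refine ⟨(u, v), mem_alts.mpr ⟨?_, ?_, ?_⟩, ?_⟩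
    · exact Fin.succ_lt_succ_iff.mp (hu ▸ hv ▸ hp1)
    · rw [← hu, ← hv]; exact hp2
    · intro j hj1 hj2
      exact hp3 j.succ (hu ▸ Fin.succ_lt_succ_iff.mpr hj1) (hv ▸ Fin.succ_lt_succ_iff.mpr hj2)
    · rw [← hu, ← hv]

lemma alts_zero_card_le (m : ℕ) (c : Fin (m + 1) → ℝ) :
    ((alts (m + 1) c).filter (fun p => p.1 = 0)).card ≤ 1 := by
  rw [Finset.card_le_one]
  intro p hp q hq
  obtain ⟨hpm, hp0⟩ := Finset.mem_filter.mp hp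
  obtain ⟨hqm, hq0⟩ := Finset.mem_filter.mp hq
  obtain ⟨hp1, hp2, hp3⟩ := mem_alts.mp hpm
  obtain ⟨hq1, hq2, hq3⟩ := mem_alts.mp hqm
  rcases lt_trichotomy p.2 q.2 with h | h | h
  · exact absurd (hq3 p.2 (hq0 ▸ hp0 ▸ hp1) h) (ne_zero_of_mul_neg_right hp2)
  · exact Prod.ext (hp0.trans hq0.symm) h
  · exact absurd (hp3 q.2 (hp0 ▸ hq0 ▸ hq1) h) (ne_zero_of_mul_neg_right hq2)

lemma alts_congr (m : ℕ) (d e : Fin m → ℝ) (t : Fin m → ℝ) (ht : ∀ i, 0 < t i)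
    (hde : ∀ i, d i = e i * t i) : alts m d = alts m e := by
  unfold alts
  apply Finset.filter_congr
  intro p _
  constructor
  · rintro ⟨h1, h2, h3⟩
    refine ⟨h1, ?_, ?_⟩
    · rw [hde p.1, hde p.2] at h2
      have h2' : (e p.1 * e p.2) * (t p.1 * t p.2) < 0 := by nlinarith [h2]
      by_contra hge
      push_neg at hge
      nlinarith [mul_pos (ht p.1) (ht p.2), h2']
    · intro i hi1 hi2
      have := h3 i hi1 hi2
      rw [hde i] at this
      rcases mul_eq_zero.mp this with h | h
      · exact h
      · exact absurd h (ht i).ne'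
  · rintro ⟨h1, h2, h3⟩
    refine ⟨h1, ?_, ?_⟩
    · rw [hde p.1, hde p.2]
      have : (e p.1 * e p.2) * (t p.1 * t p.2) < 0 :=
        mul_neg_of_neg_of_pos h2 (mul_pos (ht p.1) (ht p.2))
      nlinarith [this]
    · intro i hi1 hi2
      rw [hde i, h3 i hi1 hi2, zero_mul]

/-- generalized polynomial -/
def gfun {m : ℕ} (c a : Fin m → ℝ) : ℝ → ℝ := fun x => ∑ i, c i * x ^ a i

lemma gfun_hasDerivAt {m : ℕ} (c a : Fin m → ℝ) {x : ℝ} (hx : 0 < x) :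
    HasDerivAt (gfun c a) (∑ i, c i * (a i * x ^ (a i - 1))) x := by
  apply HasDerivAt.fun_sum
  intro i _
  exact (Real.hasDerivAt_rpow_const (Or.inl hx.ne')).const_mul (c i)

lemma gfun_tendsto_zero {m : ℕ} (c a : Fin m → ℝ) (hb : ∀ i, 0 < a i) :
    Tendsto (gfun c a) (𝓝[>] 0) (𝓝 0) := by
  have h0 : (0 : ℝ) = ∑ i : Fin m, c i * (0 : ℝ) ^ a i := by
    rw [eq_comm, Finset.sum_eq_zero]
    intro i _
    rw [Real.zero_rpow (hb i).ne', mul_zero]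
  have hsum : Tendsto (gfun c a) (𝓝[>] (0:ℝ)) (𝓝 (∑ i : Fin m, c i * (0:ℝ) ^ a i)) := by
    apply tendsto_finset_sum
    intro i _
    have : Tendsto (fun x : ℝ => c i * x ^ a i) (𝓝 0) (𝓝 (c i * (0:ℝ) ^ a i)) :=
      ((Real.continuousAt_rpow_const 0 (a i) (Or.inr (hb i).le)).tendsto).const_mul (c i)
    exact this.mono_left nhdsWithin_le_nhds
  rwa [← h0] at hsum

lemma eventually_mul_pos {c0 : ℝ} (h : c0 ≠ 0) {f : ℝ → ℝ} {l : Filter ℝ}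
    (hf : Tendsto f l (𝓝 c0)) : ∀ᶠ x in l, 0 < f x * c0 := by
  have hopen : IsOpen {y : ℝ | 0 < y * c0} := isOpen_lt continuous_const (continuous_id.mul continuous_const)
  have hmem : c0 ∈ {y : ℝ | 0 < y * c0} := by
    simp only [Set.mem_setOf_eq]
    exact mul_self_pos.mpr h
  exact hf.eventually (hopen.eventually_mem hmem)

lemma strictMono_cons {n : ℕ} (x : ℝ) (f : Fin n → ℝ) (hf : StrictMono f)
    (hx : ∀ i, x < f i) : StrictMono (Fin.cons x f : Fin (n+1) → ℝ) := by
  intro i j hij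
  rcases Fin.eq_zero_or_eq_succ j with rfl | ⟨j', rfl⟩
  · exact absurd hij (Fin.not_lt_zero i)
  rcases Fin.eq_zero_or_eq_succ i with rfl | ⟨i', rfl⟩
  · simpa using hx j'
  · simp only [Fin.cons_succ]
    exact hf (Fin.succ_lt_succ_iff.mp hij)

lemma key : ∀ (m : ℕ) (c a : Fin m → ℝ), StrictMono a → (∃ i, c i ≠ 0) →
    ∀ (N : ℕ) (y : Fin N → ℝ), StrictMono y →
      (∀ j, 0 < y j ∧ gfun c a (y j) = 0) → N ≤ (alts m c).card := by
  intro m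
  induction m with
  | zero =>
    rintro c a _ ⟨i, _⟩ _ _ _ _
    exact i.elim0
  | succ m IH =>
    intro c a ha hc N y hy hroots
    by_cases hc0 : c 0 = 0
    · -- drop the leading zero coefficient
      have hroots' : ∀ j, 0 < y j ∧ gfun (fun i => c i.succ) (fun i => a i.succ) (y j) = 0 := by
        intro j
        refine ⟨(hroots j).1, ?_⟩
        have h2 := (hroots j).2
        unfold gfun at h2 ⊢
        rw [Fin.sum_univ_succ, hc0, zero_mul, zero_add] at h2
        exact h2
      have hc' : ∃ i : Fin m, c i.succ ≠ 0 := by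
        obtain ⟨i, hi⟩ := hc
        rcases Fin.eq_zero_or_eq_succ i with rfl | ⟨u, rfl⟩
        · exact absurd hc0 hi
        · exact ⟨u, hi⟩
      have ha' : StrictMono (fun i : Fin m => a i.succ) :=
        fun i j h => ha (Fin.succ_lt_succ_iff.mpr h)
      have hN := IH (fun i => c i.succ) (fun i => a i.succ) ha' hc' N y hy hroots'
      have h0 : ((alts (m+1) c).filter (fun p => p.1 = 0)) = ∅ := by
        apply Finset.eq_empty_of_forall_notMem
        intro p hp
        obtain ⟨hpm, hp0⟩ := Finset.mem_filter.mp hp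
        obtain ⟨_, hp2, _⟩ := mem_alts.mp hpm
        rw [hp0, hc0, zero_mul] at hp2
        exact lt_irrefl _ hp2
      rw [alts_succ, h0]
      simpa using hN
    · -- c 0 ≠ 0
      set A : Fin (m+1) → ℝ := fun i => a i - a 0 with hA
      set d : Fin m → ℝ := fun i => c i.succ * (a i.succ - a 0) with hd
      set b : Fin m → ℝ := fun i => a i.succ - a 0 - 1 with hbdef
      have hsuccpos : ∀ i : Fin m, a 0 < a i.succ := fun i => ha (Fin.succ_pos i)
      have hb : StrictMono b := by
        intro i j h
        have := ha (Fin.succ_lt_succ_iff.mpr h)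
        simp only [hbdef]
        linarith
      have hD : ∀ x : ℝ, 0 < x → HasDerivAt (gfun c A) (gfun d b x) x := by
        intro x hx
        have h := gfun_hasDerivAt c A hx
        have heq : (∑ i, c i * (A i * x ^ (A i - 1))) = gfun d b x := by
          unfold gfun
          rw [Fin.sum_univ_succ]
          have hA0 : A 0 = 0 := by simp [hA]
          rw [hA0]
          simp only [zero_mul, mul_zero, zero_add]
          apply Finset.sum_congr rfl
          intro i _
          simp only [hA, hd, hbdef]
          ring
        rw [heq] at h
        exact h
      have hgcont : ∀ u v : ℝ, 0 < u → ContinuousOn (gfun c A) (Icc u v) := by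
        intro u v hu x hx
        exact (hD x (lt_of_lt_of_le hu hx.1)).continuousAt.continuousWithinAt
      have hDcont : ∀ u v : ℝ, 0 < u → ContinuousOn (gfun d b) (Icc u v) := by
        intro u v hu x hx
        exact ((gfun_hasDerivAt d b (lt_of_lt_of_le hu hx.1)).continuousAt).continuousWithinAt
      have hgy : ∀ j, gfun c A (y j) = 0 := by
        intro j
        obtain ⟨hyj, hfy⟩ := hroots j
        have heq : gfun c A (y j) = gfun c a (y j) / (y j) ^ (a 0) := by
          unfold gfun
          rw [Finset.sum_div]
          apply Finset.sum_congr rfl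
          intro i _
          simp only [hA]
          rw [Real.rpow_sub hyj]
          ring
        rw [heq, hfy, zero_div]
      have rolle : ∀ u v : ℝ, 0 < u → u < v → gfun c A u = 0 → gfun c A v = 0 →
          ∃ w, u < w ∧ w < v ∧ 0 < w ∧ gfun d b w = 0 := by
        intro u v hu huv hgu hgv
        obtain ⟨w, hw, hw0⟩ := exists_hasDerivAt_eq_zero huv (hgcont u v hu)
          (hgu.trans hgv.symm) (fun x hx => hD x (hu.trans hx.1))
        exact ⟨w, hw.1, hw.2, hu.trans hw.1, hw0⟩
      by_cases htail : ∀ i : Fin m, c i.succ = 0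
      · -- f = c 0 · x^(a 0) has no positive roots
        have hN0 : N = 0 := by
          by_contra hN
          obtain ⟨hy0, hf0⟩ := hroots ⟨0, Nat.pos_of_ne_zero hN⟩
          unfold gfun at hf0
          rw [Fin.sum_univ_succ, Finset.sum_eq_zero (fun i _ => by rw [htail i, zero_mul]),
            add_zero] at hf0
          exact (mul_ne_zero hc0 (Real.rpow_pos_of_pos hy0 (a 0)).ne') hf0
        exact hN0 ▸ Nat.zero_le _
      · push_neg at htail
        obtain ⟨i0, hi0⟩ := htail
        have hd0 : ∃ i, d i ≠ 0 :=
          ⟨i0, by simp only [hd]; exact mul_ne_zero hi0 (sub_ne_zero.mpr (hsuccpos i0).ne')⟩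
        have hSne : (Finset.univ.filter (fun i : Fin m => c i.succ ≠ 0)).Nonempty :=
          ⟨i0, by simp [hi0]⟩
        set k : Fin m := (Finset.univ.filter (fun i : Fin m => c i.succ ≠ 0)).min' hSne with hk
        have hck : c k.succ ≠ 0 := by
          have hmem := Finset.min'_mem _ hSne
          rw [← hk] at hmem
          exact (Finset.mem_filter.mp hmem).2
        have hkmin : ∀ i : Fin m, i < k → c i.succ = 0 := by
          intro i hik
          by_contra h
          exact absurd (Finset.min'_le _ i (by simp [h])) (not_le.mpr hik)
        have hdk : d k ≠ 0 := by
          simp only [hd]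
          exact mul_ne_zero hck (sub_ne_zero.mpr (hsuccpos k).ne')
        have halts : (alts m d) = alts m (fun i => c i.succ) :=
          alts_congr m d (fun i => c i.succ) (fun i => a i.succ - a 0)
            (fun i => sub_pos.mpr (hsuccpos i)) (fun i => rfl)
        cases N with
        | zero => exact Nat.zero_le _
        | succ M =>
          have hzex : ∀ i : Fin M, ∃ w, y i.castSucc < w ∧ w < y i.succ ∧ 0 < w ∧ gfun d b w = 0 :=
            fun i => rolle _ _ (hroots i.castSucc).1 (hy Fin.castSucc_lt_succ) (hgy _) (hgy _)
          choose z hz1 hz2 hz3 hz4 using hzex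
          have hzmono : StrictMono z := by
            intro i j hij
            have h1 : y i.succ ≤ y j.castSucc := by
              apply hy.monotone
              rw [Fin.le_def]
              rw [Fin.lt_def] at hij
              simp only [Fin.val_succ, Fin.coe_castSucc]
              omega
            exact ((hz2 i).trans_le h1).trans (hz1 j)
          by_cases hsign : c 0 * c k.succ < 0
          · -- a sign alternation (0, k.succ) exists
            have hone : 1 ≤ ((alts (m+1) c).filter (fun p => p.1 = 0)).card := by
              refine Finset.card_pos.mpr ⟨((0 : Fin (m+1)), k.succ),
                Finset.mem_filter.mpr ⟨mem_alts.mpr ⟨Fin.succ_pos k, hsign, ?_⟩, rfl⟩⟩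
              intro i h1 h2
              obtain ⟨u, rfl⟩ := Fin.eq_succ_of_ne_zero h1.ne'
              exact hkmin u (Fin.succ_lt_succ_iff.mp h2)
            have hM := IH d b hb hd0 M z hzmono (fun j => ⟨hz3 j, hz4 j⟩)
            rw [halts] at hM
            rw [alts_succ]
            omega
          · -- no alternation at 0 : get an extra root of the derivative in (0, y 0)
            have hprod : 0 < c 0 * c k.succ :=
              (not_lt.mp hsign).lt_of_ne ((mul_ne_zero hc0 hck).symm)
            have hgeq : ∀ x : ℝ, gfun c A x =
                c 0 + gfun (fun i => c i.succ) (fun i => A i.succ) x := by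
              intro x
              unfold gfun
              rw [Fin.sum_univ_succ]
              congr 1
              have hA0 : A 0 = 0 := by simp [hA]
              rw [hA0, Real.rpow_zero, mul_one]
            have hgt : Tendsto (gfun c A) (𝓝[>] (0:ℝ)) (𝓝 (c 0)) := by
              have ht0 : Tendsto (gfun (fun i => c i.succ) (fun i => A i.succ))
                  (𝓝[>] (0:ℝ)) (𝓝 0) := by
                apply gfun_tendsto_zero
                intro i
                simp only [hA]
                linarith [hsuccpos i]
              have hadd := (tendsto_const_nhds (x := c 0) (f := 𝓝[>] (0:ℝ))).add ht0
              rw [add_zero] at hadd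
              exact hadd.congr (fun x => (hgeq x).symm)
            have E1 : ∀ᶠ x in 𝓝[>] (0:ℝ), 0 < gfun c A x * c 0 := eventually_mul_pos hc0 hgt
            have hdk' : 0 < d k * c 0 := by
              simp only [hd]
              nlinarith [sub_pos.mpr (hsuccpos k), hprod]
            have hDt : Tendsto (fun x => gfun d b x * x ^ (-(b k))) (𝓝[>] (0:ℝ)) (𝓝 (d k)) := by
              have hsum : Tendsto (fun x : ℝ => ∑ i : Fin m, d i * x ^ (b i - b k))
                  (𝓝[>] (0:ℝ)) (𝓝 (∑ i : Fin m, if i = k then d k else 0)) := by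
                apply tendsto_finset_sum
                intro i _
                by_cases hik : i = k
                · rw [hik]
                  simp only [sub_self, Real.rpow_zero, mul_one, if_pos rfl]
                  exact tendsto_const_nhds
                · rw [if_neg hik]
                  rcases lt_or_gt_of_ne hik with h | h
                  · have hdi : d i = 0 := by
                      simp only [hd]
                      rw [hkmin i h, zero_mul]
                    simp only [hdi, zero_mul]
                    exact tendsto_const_nhds
                  · have hpos : 0 < b i - b k := sub_pos.mpr (hb h)
                    have ht : Tendsto (fun x : ℝ => d i * x ^ (b i - b k)) (𝓝 0)
                        (𝓝 (d i * (0:ℝ) ^ (b i - b k))) :=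
                      ((Real.continuousAt_rpow_const 0 _ (Or.inr hpos.le)).tendsto).const_mul (d i)
                    rw [Real.zero_rpow hpos.ne', mul_zero] at ht
                    exact ht.mono_left nhdsWithin_le_nhds
              rw [Finset.sum_ite_eq' Finset.univ k (fun _ => d k), if_pos (Finset.mem_univ k)]
                at hsum
              refine hsum.congr' ?_
              filter_upwards [eventually_mem_nhdsWithin] with x hx
              have hxpos : (0:ℝ) < x := hx
              unfold gfun
              rw [Finset.sum_mul]
              apply Finset.sum_congr rfl
              intro i _
              rw [Real.rpow_sub hxpos, Real.rpow_neg hxpos.le, div_eq_mul_inv]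
              ring
            have E2 : ∀ᶠ x in 𝓝[>] (0:ℝ), 0 < gfun d b x * c 0 := by
              filter_upwards [eventually_mul_pos hdk hDt, eventually_mem_nhdsWithin] with x h1 hx
              have hxpos : (0:ℝ) < x := hx
              have ht : (0:ℝ) < x ^ (-(b k)) := Real.rpow_pos_of_pos hxpos _
              nlinarith [mul_pos h1 hdk', mul_nonneg ht.le (sq_nonneg (d k)), ht]
            have E3 : ∀ᶠ x in 𝓝[>] (0:ℝ), x < y 0 := by
              have hIio : ∀ᶠ x in 𝓝 (0:ℝ), x < y 0 :=
                isOpen_Iio.eventually_mem (show (0:ℝ) ∈ Iio (y 0) from (hroots 0).1)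
              exact hIio.filter_mono nhdsWithin_le_nhds
            obtain ⟨δ, ⟨⟨h1, h2⟩, h3⟩, hδ⟩ :=
              (((E1.and E2).and E3).and eventually_mem_nhdsWithin).exists
            have hδpos : (0:ℝ) < δ := hδ
            obtain ⟨ξ, hξmem, hξ⟩ := exists_hasDerivAt_eq_slope (gfun c A) (gfun d b) h3
              (hgcont δ (y 0) hδpos) (fun x hx => hD x (hδpos.trans hx.1))
            rw [hgy 0] at hξ
            have hξneg : gfun d b ξ * c 0 < 0 := by
              rw [hξ, div_mul_eq_mul_div]
              apply div_neg_of_neg_of_pos _ (sub_pos.mpr h3)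
              nlinarith [h1]
            have hcont : ContinuousOn (fun x => gfun d b x * c 0) (Icc δ ξ) :=
              (hDcont δ ξ hδpos).mul continuousOn_const
            have h0mem : (0:ℝ) ∈ Ioo (gfun d b ξ * c 0) (gfun d b δ * c 0) := ⟨hξneg, h2⟩
            obtain ⟨w, hwmem, hw⟩ := intermediate_value_Ioo' hξmem.1.le hcont h0mem
            have hw0 : gfun d b w = 0 := by
              rcases mul_eq_zero.mp hw with h | h
              · exact h
              · exact absurd h hc0
            have hwpos : 0 < w := hδpos.trans hwmem.1
            have hwlt : w < y 0 := hwmem.2.trans hξmem.2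
            have hzw : ∀ i, w < z i :=
              fun i => (hwlt.trans_le (hy.monotone (Fin.zero_le i.castSucc))).trans (hz1 i)
            have hcons : StrictMono (Fin.cons w z : Fin (M+1) → ℝ) := strictMono_cons w z hzmono hzw
            have hroots'' : ∀ j : Fin (M+1), 0 < (Fin.cons w z : Fin (M+1) → ℝ) j ∧
                gfun d b ((Fin.cons w z : Fin (M+1) → ℝ) j) = 0 := by
              intro j
              rcases Fin.eq_zero_or_eq_succ j with rfl | ⟨u, rfl⟩
              · simpa using ⟨hwpos, hw0⟩
              · simpa using ⟨hz3 u, hz4 u⟩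
            have hM := IH d b hb hd0 (M+1) _ hcons hroots''
            rw [halts] at hM
            rw [alts_succ]
            omega

end DescartesAux

/-- Universal Generalization of Descartes' Rule of Signs:
a univariate generalized polynomial `f(x) = ∑ cᵢ x^{aᵢ}` with real exponents
`a₁ < ⋯ < a_m` has at most as many positive roots as sign alternations of `(c₁,…,c_m)`,
and in particular at most `m - 1` positive roots. -/
theorem stmt_0 (m : ℕ) (c a : Fin m → ℝ) (ha : StrictMono a) (hc : ∃ i, c i ≠ 0) :
    {x : ℝ | 0 < x ∧ ∑ i, c i * x ^ a i = 0}.Finite ∧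
    {x : ℝ | 0 < x ∧ ∑ i, c i * x ^ a i = 0}.ncard ≤
      (Finset.univ.filter (fun p : Fin m × Fin m =>
        p.1 < p.2 ∧ c p.1 * c p.2 < 0 ∧ ∀ i, p.1 < i → i < p.2 → c i = 0)).card ∧
    (Finset.univ.filter (fun p : Fin m × Fin m =>
        p.1 < p.2 ∧ c p.1 * c p.2 < 0 ∧ ∀ i, p.1 < i → i < p.2 → c i = 0)).card ≤ m - 1 := by
  have hV : (Finset.univ.filter (fun p : Fin m × Fin m =>
      p.1 < p.2 ∧ c p.1 * c p.2 < 0 ∧ ∀ i, p.1 < i → i < p.2 → c i = 0)) = alts m c := rfl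
  set S := {x : ℝ | 0 < x ∧ ∑ i, c i * x ^ a i = 0} with hSdef
  have keyT : ∀ T : Finset ℝ, ↑T ⊆ S → T.card ≤ (alts m c).card := by
    intro T hT
    set o := T.orderIsoOfFin (rfl : T.card = T.card) with ho
    apply key m c a ha hc T.card (fun i => ((o i : ℝ)))
    · intro i j hij
      exact_mod_cast o.strictMono hij
    · intro j
      exact hT (o j).2
  have hfin : S.Finite := by
    by_contra hinf
    obtain ⟨T, hTs, hTc⟩ := Set.Infinite.exists_subset_card_eq hinf ((alts m c).card + 1)
    have := keyT T hTs
    omega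
  rw [hV]
  refine ⟨hfin, ?_, alts_card_le m c⟩
  rw [Set.ncard_eq_toFinset_card S hfin]
  exact keyT hfin.toFinset (by simp)
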